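/- Fix m ≥ 1 and row vectors x, z : Fin m → ZMod 2 with x ≠ 0. Let Ω be the set of pairs (A, S) of m×m matrices over ZMod 2 with A invertible and S symmetric (Sᵀ = S). Define Φ : Ω → (Fin m → ZMod 2) × (Fin m → ZMod 2) by Φ(A, S) := (x ·ᵥ A, x ·ᵥ (S * (A⁻¹)ᵀ) + z ·ᵥ (A⁻¹)ᵀ), where v ·ᵥ M denotes the row-vector–matrix product (Matrix.vecMul). Then the image of Φ is exactly { (u, v) | u ≠ 0 }, and all fibers of Φ over this set have the same cardinality, namely |Ω| / ((2^m − 1) · 2^m). Equivalently, for (A, S) uniformly random in Ω, Φ(A, S) is uniformly distributed on ((Fin m → ZMod 2) \ {0}) × (Fin m → ZMod 2). -/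

import Mathlib

open Matrix
open scoped Classical

section Aux

variable {m : ℕ}

private lemma z2_add_self : ∀ a : ZMod 2, a + a = 0 := by decide
private lemma z2_ne_zero : ∀ a : ZMod 2, a ≠ 0 → a = 1 := by decide
private lemma z2_ne_one : ∀ a : ZMod 2, a ≠ 1 → a = 0 := by decide

private lemma vadd_self (v : Fin m → ZMod 2) : v + v = 0 := by
  funext i; exact z2_add_self _

private lemma madd_self (M : Matrix (Fin m) (Fin m) (ZMod 2)) : M + M = 0 := by
  ext i j; exact z2_add_self _

private lemma vmv (v a b : Fin m → ZMod 2) :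
    v ᵥ* vecMulVec a b = (v ⬝ᵥ a) • b := by
  funext k
  simp only [vecMul, dotProduct, vecMulVec_apply, Pi.smul_apply, smul_eq_mul,
    Finset.sum_mul]
  exact Finset.sum_congr rfl fun i _ => by ring

private lemma mvv (a b c d : Fin m → ZMod 2) :
    vecMulVec a b * vecMulVec c d = (b ⬝ᵥ c) • vecMulVec a d := by
  ext i j
  simp only [mul_apply, vecMulVec_apply, Matrix.smul_apply, dotProduct, smul_eq_mul,
    Finset.sum_mul]
  exact Finset.sum_congr rfl fun k _ => by ring

private lemma vsmulM (v : Fin m → ZMod 2) (c : ZMod 2)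
    (M : Matrix (Fin m) (Fin m) (ZMod 2)) : v ᵥ* (c • M) = c • (v ᵥ* M) := by
  funext k
  simp only [vecMul, dotProduct, Matrix.smul_apply, Pi.smul_apply, smul_eq_mul,
    Finset.mul_sum]
  exact Finset.sum_congr rfl fun i _ => by ring

private lemma tvv (a b : Fin m → ZMod 2) : (vecMulVec a b)ᵀ = vecMulVec b a := by
  ext i j; simp [vecMulVec_apply, mul_comm]

/-- The involution `1 + c ⊗ d`: row-vector action. -/
private lemma vecMul_invol (v c d : Fin m → ZMod 2) :
    v ᵥ* (1 + vecMulVec c d) = v + (v ⬝ᵥ c) • d := by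
  rw [vecMul_add, vecMul_one, vmv]

private lemma invol_sq (c d : Fin m → ZMod 2) (h : d ⬝ᵥ c = 0) :
    (1 + vecMulVec c d) * (1 + vecMulVec c d) = 1 := by
  have hC : vecMulVec c d * vecMulVec c d = 0 := by rw [mvv, h, zero_smul]
  rw [add_mul, mul_add, mul_add, hC, one_mul, one_mul, mul_one, add_zero, add_assoc,
    madd_self, add_zero]

private lemma exists_dot (x u : Fin m → ZMod 2) (hx : x ≠ 0) (hu : u ≠ 0) :
    ∃ c, x ⬝ᵥ c = 1 ∧ u ⬝ᵥ c = 1 := by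
  obtain ⟨i, hi⟩ := Function.ne_iff.mp hx
  obtain ⟨k, hk⟩ := Function.ne_iff.mp hu
  simp only [Pi.zero_apply] at hi hk
  have hxi : x i = 1 := z2_ne_zero _ hi
  have huk : u k = 1 := z2_ne_zero _ hk
  by_cases h1 : u i = 1
  · exact ⟨Pi.single i 1, by simp [dotProduct_single, hxi], by simp [dotProduct_single, h1]⟩
  by_cases h2 : x k = 1
  · exact ⟨Pi.single k 1, by simp [dotProduct_single, h2], by simp [dotProduct_single, huk]⟩
  refine ⟨Pi.single i 1 + Pi.single k 1, ?_, ?_⟩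
  · rw [dotProduct_add, dotProduct_single, dotProduct_single, hxi, z2_ne_one _ h2]
    norm_num
  · rw [dotProduct_add, dotProduct_single, dotProduct_single, huk, z2_ne_one _ h1]
    norm_num

/-- An involutory invertible matrix swapping two given nonzero row vectors. -/
private lemma exists_invol (x u : Fin m → ZMod 2) (hx : x ≠ 0) (hu : u ≠ 0) :
    ∃ M : Matrix (Fin m) (Fin m) (ZMod 2), M * M = 1 ∧ x ᵥ* M = u ∧ u ᵥ* M = x := by
  obtain ⟨c, hxc, huc⟩ := exists_dot x u hx hu
  refine ⟨1 + vecMulVec c (x + u), ?_, ?_, ?_⟩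
  · apply invol_sq
    rw [add_dotProduct, hxc, huc]; decide
  · rw [vecMul_invol, hxc, one_smul, ← add_assoc, vadd_self, zero_add]
  · rw [vecMul_invol, huc, one_smul, add_comm x u, ← add_assoc, vadd_self, zero_add]

/-- A symmetric preimage of `w` under `S ↦ x ᵥ* S`, where `x ⬝ᵥ e = 1`. -/
private def symPre (x e w : Fin m → ZMod 2) : Matrix (Fin m) (Fin m) (ZMod 2) :=
  vecMulVec e w + vecMulVec w e + (x ⬝ᵥ w) • vecMulVec e e

private lemma symPre_transpose (x e w : Fin m → ZMod 2) :
    (symPre x e w)ᵀ = symPre x e w := by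
  unfold symPre
  rw [transpose_add, transpose_add, transpose_smul, tvv, tvv, tvv,
    add_comm (vecMulVec w e)]

private lemma symPre_vecMul (x e w : Fin m → ZMod 2) (he : x ⬝ᵥ e = 1) :
    x ᵥ* symPre x e w = w := by
  unfold symPre
  rw [vecMul_add, vecMul_add, vmv, vmv, vsmulM, vmv, he, one_smul, one_smul,
    add_assoc, ← add_smul, z2_add_self, zero_smul, add_zero]

private lemma symPre_add (x e w w' : Fin m → ZMod 2) :
    symPre x e (w + w') = symPre x e w + symPre x e w' := by
  ext i j
  simp only [symPre, Matrix.add_apply, Matrix.smul_apply, vecMulVec_apply, Pi.add_apply,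
    dotProduct_add, smul_eq_mul]
  ring

/-- The key reformulation of the second component of `Φ`. -/
private lemma phi2 (A S : Matrix (Fin m) (Fin m) (ZMod 2)) (hA : IsUnit A)
    (x z v : Fin m → ZMod 2) :
    x ᵥ* (S * (A⁻¹)ᵀ) + z ᵥ* (A⁻¹)ᵀ = v ↔ x ᵥ* S = v ᵥ* Aᵀ + z := by
  have hdet := (Matrix.isUnit_iff_isUnit_det A).1 hA
  have h1 : (A⁻¹)ᵀ * Aᵀ = 1 := by
    rw [← transpose_mul, Matrix.mul_nonsing_inv A hdet, transpose_one]
  have h2 : Aᵀ * (A⁻¹)ᵀ = 1 := by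
    rw [← transpose_mul, Matrix.nonsing_inv_mul A hdet, transpose_one]
  have hL : x ᵥ* (S * (A⁻¹)ᵀ) + z ᵥ* (A⁻¹)ᵀ = (x ᵥ* S + z) ᵥ* (A⁻¹)ᵀ := by
    rw [add_vecMul, vecMul_vecMul]
  rw [hL]
  constructor
  · intro h
    have h' := congrArg (· ᵥ* Aᵀ) h
    simp only [vecMul_vecMul, h1, vecMul_one] at h'
    rw [← h', add_assoc, vadd_self, add_zero]
  · intro h
    rw [h, add_assoc, vadd_self, add_zero, vecMul_vecMul, h2, vecMul_one]

end Aux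


section Main

variable {m : ℕ}

private lemma isUnit_of_sq (M : Matrix (Fin m) (Fin m) (ZMod 2)) (h : M * M = 1) :
    IsUnit M := by
  rw [Matrix.isUnit_iff_isUnit_det]
  apply IsUnit.of_mul_eq_one M.det
  rw [← Matrix.det_mul, h, Matrix.det_one]

private lemma add_add_cancel (a b : Fin m → ZMod 2) : a + (b + a) = b := by
  rw [add_comm b a, ← add_assoc, vadd_self, zero_add]

private lemma vecMul_ne_zero (x : Fin m → ZMod 2) (hx : x ≠ 0)
    (A : Matrix (Fin m) (Fin m) (ZMod 2)) (hA : IsUnit A) : x ᵥ* A ≠ 0 := by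
  intro h0
  have hdet := (Matrix.isUnit_iff_isUnit_det A).1 hA
  have : x = (x ᵥ* A) ᵥ* A⁻¹ := by
    rw [vecMul_vecMul, Matrix.mul_nonsing_inv A hdet, vecMul_one]
  rw [h0, zero_vecMul] at this
  exact hx this

/-- One-directional fiber cardinality comparison. -/
private lemma fiber_le (x z : Fin m → ZMod 2) (e : Fin m → ZMod 2) (he : x ⬝ᵥ e = 1)
    (u v u' v' : Fin m → ZMod 2) (M : Matrix (Fin m) (Fin m) (ZMod 2))
    (hM : M * M = 1) (hMu : u ᵥ* M = u') :
    ((Finset.univ.filter fun p : Matrix (Fin m) (Fin m) (ZMod 2) × Matrix (Fin m) (Fin m) (ZMod 2) => IsUnit p.1 ∧ p.2ᵀ = p.2).filter fun p =>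
        (x ᵥ* p.1, x ᵥ* (p.2 * (p.1⁻¹)ᵀ) + z ᵥ* (p.1⁻¹)ᵀ) = (u, v)).card ≤
    ((Finset.univ.filter fun p : Matrix (Fin m) (Fin m) (ZMod 2) × Matrix (Fin m) (Fin m) (ZMod 2) => IsUnit p.1 ∧ p.2ᵀ = p.2).filter fun p =>
        (x ᵥ* p.1, x ᵥ* (p.2 * (p.1⁻¹)ᵀ) + z ᵥ* (p.1⁻¹)ᵀ) = (u', v')).card := by
  have hMunit : IsUnit M := isUnit_of_sq M hM
  apply Finset.card_le_card_of_injOn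
    (fun p => (p.1 * M, p.2 + symPre x e ((v' ᵥ* (p.1 * M)ᵀ + z) + (v ᵥ* p.1ᵀ + z))))
  · intro p hp
    simp only [Finset.mem_coe, Finset.mem_filter, Finset.mem_univ, true_and, Prod.mk.injEq] at hp ⊢
    obtain ⟨⟨hA, hS⟩, h1, h2⟩ := hp
    have hxS : x ᵥ* p.2 = v ᵥ* p.1ᵀ + z := (phi2 p.1 p.2 hA x z v).1 h2
    refine ⟨⟨hA.mul hMunit, ?_⟩, ?_, ?_⟩
    · rw [transpose_add, hS, symPre_transpose]
    · rw [← vecMul_vecMul, h1, hMu]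
    · refine (phi2 (p.1 * M) _ (hA.mul hMunit) x z v').2 ?_
      rw [vecMul_add, hxS, symPre_vecMul x e _ he, add_add_cancel]
  · intro p hp q hq h
    simp only [Finset.coe_filter, Set.mem_setOf_eq, Finset.mem_univ, true_and] at hp hq
    have h1 : p.1 * M = q.1 * M := congrArg Prod.fst h
    have hp1 : p.1 = q.1 := by
      have := congrArg (· * M) h1
      simpa only [mul_assoc, hM, mul_one] using this
    have h2 := congrArg Prod.snd h
    simp only at h2
    rw [hp1] at h2
    have hp2 : p.2 = q.2 := add_right_cancel h2
    exact Prod.ext hp1 hp2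

/-- Every fiber over a pair with nonzero first component is nonempty. -/
private lemma fiber_nonempty (x z : Fin m → ZMod 2) (hx : x ≠ 0)
    (e : Fin m → ZMod 2) (he : x ⬝ᵥ e = 1) (u v : Fin m → ZMod 2) (hu : u ≠ 0) :
    ∃ p : Matrix (Fin m) (Fin m) (ZMod 2) × Matrix (Fin m) (Fin m) (ZMod 2),
      (IsUnit p.1 ∧ p.2ᵀ = p.2) ∧
      (x ᵥ* p.1, x ᵥ* (p.2 * (p.1⁻¹)ᵀ) + z ᵥ* (p.1⁻¹)ᵀ) = (u, v) := by
  obtain ⟨M, hM2, hMx, -⟩ := exists_invol x u hx hu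
  have hMunit : IsUnit M := isUnit_of_sq M hM2
  refine ⟨(M, symPre x e (v ᵥ* Mᵀ + z)), ⟨hMunit, symPre_transpose x e _⟩, ?_⟩
  rw [Prod.mk.injEq]
  exact ⟨hMx, (phi2 M _ hMunit x z v).2 (symPre_vecMul x e _ he)⟩

end Main

/-- For fixed row vectors `x ≠ 0` and `z` over `𝔽₂`, the map
`(A, S) ↦ (x ·ᵥ A, x ·ᵥ (S * (A⁻¹)ᵀ) + z ·ᵥ (A⁻¹)ᵀ)`, defined on the set `Ω` of pairs of
an invertible matrix `A` and a symmetric matrix `S`, has image exactly the pairs `(u, v)`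
with `u ≠ 0`, and all its fibers over this image have the same cardinality
`|Ω| / ((2^m − 1) · 2^m)`. -/
theorem stmt_7 (m : ℕ) (hm : 1 ≤ m) (x z : Fin m → ZMod 2) (hx : x ≠ 0) :
    letI Ω : Finset (Matrix (Fin m) (Fin m) (ZMod 2) × Matrix (Fin m) (Fin m) (ZMod 2)) :=
      Finset.univ.filter fun p => IsUnit p.1 ∧ p.2ᵀ = p.2
    letI Φ : Matrix (Fin m) (Fin m) (ZMod 2) × Matrix (Fin m) (Fin m) (ZMod 2) →
        (Fin m → ZMod 2) × (Fin m → ZMod 2) :=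
      fun p => (x ᵥ* p.1, x ᵥ* (p.2 * (p.1⁻¹)ᵀ) + z ᵥ* (p.1⁻¹)ᵀ)
    Ω.image Φ
        = Finset.univ.filter (fun q : (Fin m → ZMod 2) × (Fin m → ZMod 2) => q.1 ≠ 0) ∧
      ∀ u v : Fin m → ZMod 2, u ≠ 0 →
        (Ω.filter fun p => Φ p = (u, v)).card = Ω.card / ((2 ^ m - 1) * 2 ^ m) := by
  -- pick `e` with `x ⬝ᵥ e = 1`
  obtain ⟨i0, hi0⟩ := Function.ne_iff.mp hx
  simp only [Pi.zero_apply] at hi0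
  set e : Fin m → ZMod 2 := Pi.single i0 1 with he_def
  have he : x ⬝ᵥ e = 1 := by
    rw [he_def, dotProduct_single, z2_ne_zero _ hi0, mul_one]
  -- equality of all fibers
  have hfib : ∀ u v u' v' : Fin m → ZMod 2, u ≠ 0 → u' ≠ 0 →
      ((Finset.univ.filter fun p : Matrix (Fin m) (Fin m) (ZMod 2) × Matrix (Fin m) (Fin m) (ZMod 2) => IsUnit p.1 ∧ p.2ᵀ = p.2).filter fun p =>
        (x ᵥ* p.1, x ᵥ* (p.2 * (p.1⁻¹)ᵀ) + z ᵥ* (p.1⁻¹)ᵀ) = (u, v)).card =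
      ((Finset.univ.filter fun p : Matrix (Fin m) (Fin m) (ZMod 2) × Matrix (Fin m) (Fin m) (ZMod 2) => IsUnit p.1 ∧ p.2ᵀ = p.2).filter fun p =>
        (x ᵥ* p.1, x ᵥ* (p.2 * (p.1⁻¹)ᵀ) + z ᵥ* (p.1⁻¹)ᵀ) = (u', v')).card := by
    intro u v u' v' hu hu'
    obtain ⟨M, hM2, hM1, hM1'⟩ := exists_invol u u' hu hu'
    exact le_antisymm (fiber_le x z e he u v u' v' M hM2 hM1)
      (fiber_le x z e he u' v' u v M hM2 hM1')
  -- the target set and its cardinality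
  have hcardV : Fintype.card (Fin m → ZMod 2) = 2 ^ m := by
    rw [Fintype.card_fun, ZMod.card, Fintype.card_fin]
  have hTcard : (Finset.univ.filter
      (fun q : (Fin m → ZMod 2) × (Fin m → ZMod 2) => q.1 ≠ 0)).card
      = (2 ^ m - 1) * 2 ^ m := by
    have hprod : (Finset.univ.filter
        (fun q : (Fin m → ZMod 2) × (Fin m → ZMod 2) => q.1 ≠ 0))
        = (Finset.univ.filter fun u : Fin m → ZMod 2 => u ≠ 0) ×ˢ Finset.univ := by
      ext q
      simp [Finset.mem_product]
    rw [hprod, Finset.card_product, Finset.filter_ne',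
      Finset.card_erase_of_mem (Finset.mem_univ _), Finset.card_univ, hcardV]
  have hmem : ∀ p ∈ (Finset.univ.filter
      fun p : Matrix (Fin m) (Fin m) (ZMod 2) × Matrix (Fin m) (Fin m) (ZMod 2) =>
        IsUnit p.1 ∧ p.2ᵀ = p.2),
      ((x ᵥ* p.1, x ᵥ* (p.2 * (p.1⁻¹)ᵀ) + z ᵥ* (p.1⁻¹)ᵀ) : (Fin m → ZMod 2) × (Fin m → ZMod 2))
        ∈ (Finset.univ.filter
          (fun q : (Fin m → ZMod 2) × (Fin m → ZMod 2) => q.1 ≠ 0)) := by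
    intro p hp
    simp only [Finset.mem_filter, Finset.mem_univ, true_and] at hp ⊢
    exact vecMul_ne_zero x hx p.1 hp.1
  constructor
  · -- image = target
    ext q
    simp only [Finset.mem_image, Finset.mem_filter, Finset.mem_univ, true_and]
    constructor
    · rintro ⟨p, ⟨hA, hS⟩, rfl⟩
      exact vecMul_ne_zero x hx p.1 hA
    · intro hq
      obtain ⟨p, hp1, hp2⟩ := fiber_nonempty x z hx e he q.1 q.2 hq
      exact ⟨p, hp1, by rw [hp2]⟩
  · -- fiber cardinalities
    intro u v hu
    have hu0 : (Pi.single i0 1 : Fin m → ZMod 2) ≠ 0 := by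
      intro h
      simpa using congrFun h i0
    have hsum := Finset.card_eq_sum_card_fiberwise hmem
    have hconst : ∀ q ∈ (Finset.univ.filter
        (fun q : (Fin m → ZMod 2) × (Fin m → ZMod 2) => q.1 ≠ 0)),
        ((Finset.univ.filter
          fun p : Matrix (Fin m) (Fin m) (ZMod 2) × Matrix (Fin m) (Fin m) (ZMod 2) =>
            IsUnit p.1 ∧ p.2ᵀ = p.2).filter fun p =>
          (x ᵥ* p.1, x ᵥ* (p.2 * (p.1⁻¹)ᵀ) + z ᵥ* (p.1⁻¹)ᵀ) = q).card
        = ((Finset.univ.filter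
          fun p : Matrix (Fin m) (Fin m) (ZMod 2) × Matrix (Fin m) (Fin m) (ZMod 2) =>
            IsUnit p.1 ∧ p.2ᵀ = p.2).filter fun p =>
          (x ᵥ* p.1, x ᵥ* (p.2 * (p.1⁻¹)ᵀ) + z ᵥ* (p.1⁻¹)ᵀ) = (Pi.single i0 1, 0)).card := by
      intro q hq
      simp only [Finset.mem_filter, Finset.mem_univ, true_and] at hq
      have h := hfib q.1 q.2 (Pi.single i0 1) 0 hq hu0
      simpa only [Prod.mk.eta] using h
    have hOm : (Finset.univ.filter
        fun p : Matrix (Fin m) (Fin m) (ZMod 2) × Matrix (Fin m) (Fin m) (ZMod 2) =>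
          IsUnit p.1 ∧ p.2ᵀ = p.2).card
        = ((2 ^ m - 1) * 2 ^ m) * ((Finset.univ.filter
          fun p : Matrix (Fin m) (Fin m) (ZMod 2) × Matrix (Fin m) (Fin m) (ZMod 2) =>
            IsUnit p.1 ∧ p.2ᵀ = p.2).filter fun p =>
          (x ᵥ* p.1, x ᵥ* (p.2 * (p.1⁻¹)ᵀ) + z ᵥ* (p.1⁻¹)ᵀ) = (Pi.single i0 1, 0)).card := by
      rw [hsum, Finset.sum_congr rfl hconst, Finset.sum_const, smul_eq_mul, hTcard]
    have hK : 0 < (2 ^ m - 1) * 2 ^ m := by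
      have h2 : 2 ≤ 2 ^ m := by
        calc 2 = 2 ^ 1 := rfl
        _ ≤ 2 ^ m := Nat.pow_le_pow_right (by norm_num) hm
      apply Nat.mul_pos <;> omega
    rw [hOm, Nat.mul_div_cancel_left _ hK]
    exact hfib u v (Pi.single i0 1) 0 hu hu0
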